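/- Lindenbaum-type lemma for QRC₁: given a finite signature Σ with set of constants C, a finite set Φ of closed formulas in the language of Σ, and a consistent pair p ⊆ Cl_C(Φ), there exist a finite set of constants D ⊇ C and a pair q ⊇ p in the language of Σ extended by D such that q is Cl_D(Φ)-maximal consistent and fully witnessed, and mdepth(q⁺) = mdepth(p⁺). -/

import Mathlib

/-- A signature: constants and relation symbols with arities (no function symbols). -/
structure Signature where
  Const : Type
  Rel : Type
  arity : Rel → ℕ

/-- Terms: variables (numbered) or constants. -/
inductive Term (Sig : Signature) : Type where
  | var : ℕ → Term Sig
  | const : Sig.Const → Term Sig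

/-- Strictly positive formulas of QRC₁. -/
inductive Formula (Sig : Signature) : Type where
  | top : Formula Sig
  | rel : (S : Sig.Rel) → (Fin (Sig.arity S) → Term Sig) → Formula Sig
  | and : Formula Sig → Formula Sig → Formula Sig
  | dia : Formula Sig → Formula Sig
  | all : ℕ → Formula Sig → Formula Sig

namespace Term

variable {Sig : Signature}

def fv : Term Sig → Set ℕ
  | var x => {x}
  | const _ => ∅

def consts : Term Sig → Set Sig.Const
  | var _ => ∅
  | const c => {c}

def subst (t : Term Sig) (x : ℕ) (u : Term Sig) : Term Sig :=
  match t with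
  | var y => if y = x then u else var y
  | const c => const c

end Term

namespace Formula

variable {Sig : Signature}

/-- Free variables of a formula. -/
def fv : Formula Sig → Set ℕ
  | top => ∅
  | rel _ ts => ⋃ i, (ts i).fv
  | and φ ψ => φ.fv ∪ ψ.fv
  | dia φ => φ.fv
  | all x φ => φ.fv \ {x}

/-- Constants occurring in a formula. -/
def consts : Formula Sig → Set Sig.Const
  | top => ∅
  | rel _ ts => ⋃ i, (ts i).consts
  | and φ ψ => φ.consts ∪ ψ.consts
  | dia φ => φ.consts
  | all _ φ => φ.consts

/-- Simultaneous substitution of the term `u` for the free occurrences of `x`. -/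
def subst : Formula Sig → ℕ → Term Sig → Formula Sig
  | top, _, _ => top
  | rel S ts, x, u => rel S (fun i => (ts i).subst x u)
  | and φ ψ, x, u => and (φ.subst x u) (ψ.subst x u)
  | dia φ, x, u => dia (φ.subst x u)
  | all y φ, x, u => if y = x then all y φ else all y (φ.subst x u)

/-- `t` is free for `x` in `φ`: no free variable of `t` becomes bound in `φ[x/t]`. -/
def freeFor : Formula Sig → ℕ → Term Sig → Prop
  | top, _, _ => True
  | rel _ _, _, _ => True
  | and φ ψ, x, t => φ.freeFor x t ∧ ψ.freeFor x t
  | dia φ, x, t => φ.freeFor x t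
  | all y φ, x, t => x ∉ (Formula.all y φ).fv ∨ (y ∉ t.fv ∧ φ.freeFor x t)

/-- Modal depth. -/
def mdepth : Formula Sig → ℕ
  | top => 0
  | rel _ _ => 0
  | and φ ψ => max φ.mdepth ψ.mdepth
  | dia φ => φ.mdepth + 1
  | all _ φ => φ.mdepth

def size : Formula Sig → ℕ
  | top => 1
  | rel _ _ => 1
  | and φ ψ => φ.size + ψ.size + 1
  | dia φ => φ.size + 1
  | all _ φ => φ.size + 1

theorem size_subst (φ : Formula Sig) (x : ℕ) (t : Term Sig) :
    (φ.subst x t).size = φ.size := by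
  induction φ with
  | top => rfl
  | rel S ts => rfl
  | and φ ψ ihφ ihψ => simp [Formula.subst, Formula.size, ihφ, ihψ]
  | dia φ ih => simp [Formula.subst, Formula.size, ih]
  | all y φ ih =>
      by_cases h : y = x <;> simp [Formula.subst, Formula.size, h, ih]

end Formula

/-- Derivability of sequents `φ ⊢ ψ` in QRC₁. -/
inductive Derives {Sig : Signature} : Formula Sig → Formula Sig → Prop where
  | topIntro (φ : Formula Sig) : Derives φ .top
  | refl (φ : Formula Sig) : Derives φ φ
  | andE₁ (φ ψ : Formula Sig) : Derives (.and φ ψ) φ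
  | andE₂ (φ ψ : Formula Sig) : Derives (.and φ ψ) ψ
  | andI {φ ψ χ : Formula Sig} : Derives φ ψ → Derives φ χ → Derives φ (.and ψ χ)
  | cut {φ ψ χ : Formula Sig} : Derives φ ψ → Derives ψ χ → Derives φ χ
  | nec {φ ψ : Formula Sig} : Derives φ ψ → Derives (.dia φ) (.dia ψ)
  | diaTrans (φ : Formula Sig) : Derives (.dia (.dia φ)) (.dia φ)
  | diaAll (x : ℕ) (φ : Formula Sig) : Derives (.dia (.all x φ)) (.all x (.dia φ))
  | allR {φ ψ : Formula Sig} {x : ℕ} : Derives φ ψ → x ∉ φ.fv → Derives φ (.all x ψ)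
  | allL {φ ψ : Formula Sig} {x : ℕ} {t : Term Sig} :
      Derives (φ.subst x t) ψ → φ.freeFor x t → Derives (.all x φ) ψ
  | termInst {φ ψ : Formula Sig} {x : ℕ} {t : Term Sig} :
      Derives φ ψ → φ.freeFor x t → ψ.freeFor x t →
      Derives (φ.subst x t) (ψ.subst x t)
  | constGen {φ ψ : Formula Sig} {x : ℕ} {c : Sig.Const} :
      Derives (φ.subst x (.const c)) (ψ.subst x (.const c)) →
      c ∉ φ.consts → c ∉ ψ.consts → Derives φ ψ

/-- Extension of a signature by a collection `C` of new constants. -/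
def Signature.extend (Sig : Signature) (C : Type) : Signature :=
  ⟨Sig.Const ⊕ C, Sig.Rel, Sig.arity⟩

/-- A term of `Sig` seen as a term of the extended signature. -/
def Term.lift {Sig : Signature} {C : Type} : Term Sig → Term (Sig.extend C)
  | .var x => .var x
  | .const c => .const (Sum.inl c)

/-- A formula of `Sig` seen as a formula of the extended signature. -/
def Formula.lift {Sig : Signature} {C : Type} : Formula Sig → Formula (Sig.extend C)
  | .top => .top
  | .rel S ts => .rel S (fun i => (ts i).lift)
  | .and φ ψ => .and φ.lift ψ.lift
  | .dia φ => .dia φ.lift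
  | .all x φ => .all x φ.lift

/-! ### Relational semantics -/

/-- A relational model (on an underlying frame `⟨W, R, D⟩`):
worlds, accessibility, finite domains, constant and relation interpretations. -/
structure Model (Sig : Signature) where
  W : Type
  U : Type
  nonempty : Nonempty W
  R : W → W → Prop
  D : W → Set U
  Dfin : ∀ w, (D w).Finite
  I : W → Sig.Const → U
  Imem : ∀ w c, I w c ∈ D w
  J : (w : W) → (S : Sig.Rel) → Set (Fin (Sig.arity S) → U)
  Jmem : ∀ w S f, f ∈ J w S → ∀ i, f i ∈ D w

namespace Model

variable {Sig : Signature}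

/-- A `w`-assignment: a map from variables into the domain of `w`. -/
def IsAssignment (M : Model Sig) (w : M.W) (g : ℕ → M.U) : Prop :=
  ∀ n, g n ∈ M.D w

/-- Value of a term at a world under an assignment. -/
def tval (M : Model Sig) (w : M.W) (g : ℕ → M.U) : Term Sig → M.U
  | .var x => g x
  | .const c => M.I w c

end Model

/-- `Γ`-alternative assignments: they agree on all variables outside `Γ`. -/
def AltOn {U : Type} (Γ : Set ℕ) (g h : ℕ → U) : Prop :=
  ∀ y, y ∉ Γ → g y = h y

/-- Truth at a world under an assignment. -/
def Model.Forces {Sig : Signature} (M : Model Sig) :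
    M.W → (ℕ → M.U) → Formula Sig → Prop
  | _, _, .top => True
  | w, g, .rel S ts => (fun i => M.tval w g (ts i)) ∈ M.J w S
  | w, g, .and φ ψ => M.Forces w g φ ∧ M.Forces w g ψ
  | w, g, .dia φ => ∃ v, M.R w v ∧ M.Forces v g φ
  | w, g, .all x φ =>
      ∀ h : ℕ → M.U, M.IsAssignment w h → AltOn {x} g h → M.Forces w h φ

/-- Adequate models: inclusive, transitive, and concordant. -/
def Model.Adequate {Sig : Signature} (M : Model Sig) : Prop :=
  (∀ w u, M.R w u → M.D w ⊆ M.D u) ∧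
  (∀ w u v, M.R w u → M.R u v → M.R w v) ∧
  (∀ w u, M.R w u → ∀ c, M.I w c = M.I u c)

/-- The model `M` restricted at the world `r`. -/
def Model.restrict {Sig : Signature} (M : Model Sig) (r : M.W) : Model Sig where
  W := {w : M.W // w = r ∨ M.R r w}
  U := M.U
  nonempty := ⟨⟨r, Or.inl rfl⟩⟩
  R w v := M.R w.1 v.1
  D w := M.D w.1
  Dfin w := M.Dfin w.1
  I w c := M.I w.1 c
  Imem w c := M.Imem w.1 c
  J w S := M.J w.1 S
  Jmem w S f h i := M.Jmem w.1 S f h i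

/-- The model `M` restricted at `r`, with the interpretation of the constant `c`
set to `d ∈ M_r` at every world. -/
noncomputable def Model.restrictSubst {Sig : Signature} (M : Model Sig) (r : M.W) (c : Sig.Const)
    (d : M.U) (hd : d ∈ M.D r) (hinc : ∀ w u, M.R w u → M.D w ⊆ M.D u) : Model Sig :=
  { M.restrict r with
    I := fun w c' => @ite _ (c' = c) (Classical.propDecidable _) d (M.I w.1 c')
    Imem := by
      intro w c'
      by_cases h : c' = c
      · simp only [h, if_pos rfl]
        rcases w.2 with h' | h'
        · show d ∈ M.D w.1; rw [h']; exact hd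
        · exact hinc r w.1 h' hd
      · show @ite _ (c' = c) (Classical.propDecidable _) d (M.I w.1 c') ∈ M.D w.1
        rw [if_neg h]
        exact M.Imem w.1 c' }

/-! ### Pairs, closure, maximal consistency -/

/-- A pair of sets of formulas (positive and negative part). -/
structure Pair (Sig : Signature) where
  pos : Set (Formula Sig)
  neg : Set (Formula Sig)

/-- `Γ ⊢ φ`: some finite conjunction of members of `Γ` derives `φ`. -/
def SetDerives {Sig : Signature} (Γ : Set (Formula Sig)) (φ : Formula Sig) : Prop :=
  ∃ (γ : Formula Sig) (l : List (Formula Sig)),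
    γ ∈ Γ ∧ (∀ δ ∈ l, δ ∈ Γ) ∧ Derives (l.foldl Formula.and γ) φ

namespace Pair

variable {Sig : Signature}

/-- A pair is consistent if no member of the negative part follows from the positive part. -/
def Consistent (p : Pair Sig) : Prop :=
  ∀ δ ∈ p.neg, ¬ SetDerives p.pos δ

/-- `q` is a `Φ`-extension of `p`. -/
def Ext (p q : Pair Sig) (Φ : Set (Formula Sig)) : Prop :=
  p.pos ⊆ q.pos ∧ q.pos ⊆ Φ ∧ p.neg ⊆ q.neg ∧ q.neg ⊆ Φ

/-- `Φ`-maximal consistency. -/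
def MaxCons (p : Pair Sig) (Φ : Set (Formula Sig)) : Prop :=
  p.Consistent ∧ p.pos ⊆ Φ ∧ p.neg ⊆ Φ ∧
    ∀ q : Pair Sig, p.Ext q Φ → q.Consistent → q = p

/-- A pair is fully witnessed if every negative universal has a constant witness. -/
def FullyWitnessed (p : Pair Sig) : Prop :=
  ∀ (x : ℕ) (φ : Formula Sig), Formula.all x φ ∈ p.neg →
    ∃ c : Sig.Const, φ.subst x (.const c) ∈ p.neg

end Pair

/-- Closure of a formula under a set of constants. -/
def Cl {Sig : Signature} (C : Set Sig.Const) : Formula Sig → Set (Formula Sig)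
  | .top => {.top}
  | .rel S ts => {.rel S ts, .top}
  | .and φ ψ => {.and φ ψ} ∪ Cl C φ ∪ Cl C ψ
  | .dia φ => {.dia φ} ∪ Cl C φ
  | .all x φ => {.all x φ} ∪ ⋃ c ∈ C, Cl C (φ.subst x (.const c))
termination_by φ => φ.size
decreasing_by
  all_goals simp [Formula.size, Formula.size_subst]
  all_goals omega

/-- Closure of a set of formulas under a set of constants. -/
def ClSet {Sig : Signature} (C : Set Sig.Const) (Γ : Set (Formula Sig)) :
    Set (Formula Sig) :=
  ⋃ φ ∈ Γ, Cl C φ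

/-- Modal depth of a set of formulas (as a supremum in ℕ). -/
noncomputable def mdepthSet {Sig : Signature} (Γ : Set (Formula Sig)) : ℕ :=
  sSup (Formula.mdepth '' Γ)

/-- The relation `R̂` between pairs. -/
def hatR {Sig : Signature} (p q : Pair Sig) : Prop :=
  (∀ φ : Formula Sig, Formula.dia φ ∈ p.neg → φ ∈ q.neg ∧ Formula.dia φ ∈ q.neg) ∧
  (∃ ψ : Formula Sig, Formula.dia ψ ∈ p.pos ∧ Formula.dia ψ ∈ q.neg)

section AuxQRC
variable {Sig : Signature}

lemma Formula.size_pos (φ : Formula Sig) : 0 < φ.size := by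
  cases φ <;> simp [Formula.size]

lemma Term.subst_of_not_fv (t : Term Sig) (x : ℕ) (u : Term Sig) (h : x ∉ t.fv) :
    t.subst x u = t := by
  cases t with
  | var y =>
      simp only [Term.fv, Set.mem_singleton_iff] at h
      have : ¬ (y = x) := fun hh => h hh.symm
      simp [Term.subst, this]
  | const c => rfl

lemma Formula.subst_of_not_fv (φ : Formula Sig) (x : ℕ) (u : Term Sig) (h : x ∉ φ.fv) :
    φ.subst x u = φ := by
  induction φ with
  | top => rfl
  | rel S ts =>
      simp only [Formula.fv, Set.mem_iUnion, not_exists] at h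
      simp only [Formula.subst, Formula.rel.injEq, heq_eq_eq, true_and]
      funext i; exact Term.subst_of_not_fv _ _ _ (h i)
  | and φ ψ ihφ ihψ =>
      simp only [Formula.fv, Set.mem_union, not_or] at h
      simp [Formula.subst, ihφ h.1, ihψ h.2]
  | dia φ ih => simp only [Formula.fv] at h; simp [Formula.subst, ih h]
  | all y φ ih =>
      by_cases hyx : y = x
      · simp [Formula.subst, hyx]
      · simp only [Formula.fv, Set.mem_diff, Set.mem_singleton_iff, not_and, not_not] at h
        have : x ∉ φ.fv := fun hx => hyx ((h hx).symm)
        simp [Formula.subst, hyx, ih this]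

lemma Formula.mdepth_subst (φ : Formula Sig) (x : ℕ) (t : Term Sig) :
    (φ.subst x t).mdepth = φ.mdepth := by
  induction φ generalizing x t with
  | top => rfl
  | rel S ts => rfl
  | and φ ψ ihφ ihψ => simp [Formula.subst, Formula.mdepth, ihφ, ihψ]
  | dia φ ih => simp [Formula.subst, Formula.mdepth, ih]
  | all y φ ih => by_cases h : y = x <;> simp [Formula.subst, Formula.mdepth, h, ih]

lemma Term.consts_subst_const (t : Term Sig) (x : ℕ) (c : Sig.Const) :
    (t.subst x (.const c)).consts ⊆ t.consts ∪ {c} := by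
  cases t with
  | var y =>
      by_cases h : y = x <;> simp [Term.subst, Term.consts, h]
  | const d => simp [Term.subst, Term.consts]

lemma Formula.consts_subst_const (φ : Formula Sig) (x : ℕ) (c : Sig.Const) :
    (φ.subst x (.const c)).consts ⊆ φ.consts ∪ {c} := by
  induction φ generalizing x with
  | top => simp [Formula.subst, Formula.consts]
  | rel S ts =>
      simp only [Formula.subst, Formula.consts]
      refine Set.iUnion_subset fun i => (Term.consts_subst_const _ _ _).trans ?_
      exact Set.union_subset_union_left _ (Set.subset_iUnion (fun i => (ts i).consts) i)
  | and φ ψ ihφ ihψ =>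
      simp only [Formula.subst, Formula.consts]
      refine Set.union_subset ((ihφ x).trans ?_) ((ihψ x).trans ?_) <;>
        [skip; skip] <;>
        first
          | exact Set.union_subset_union_left _ Set.subset_union_left
          | skip
      exact Set.union_subset_union_left _ Set.subset_union_right
  | dia φ ih => simpa [Formula.subst, Formula.consts] using ih x
  | all y φ ih =>
      by_cases h : y = x
      · simp [Formula.subst, h, Formula.consts]
      · simpa [Formula.subst, h, Formula.consts] using ih x

lemma Term.fv_subst_const (t : Term Sig) (x : ℕ) (c : Sig.Const) :
    (t.subst x (.const c)).fv ⊆ t.fv \ {x} := by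
  cases t with
  | var y => by_cases h : y = x <;> simp [Term.subst, Term.fv, h]
  | const d => simp [Term.subst, Term.fv]

lemma Formula.fv_subst_const (φ : Formula Sig) (x : ℕ) (c : Sig.Const) :
    (φ.subst x (.const c)).fv ⊆ φ.fv \ {x} := by
  induction φ generalizing x with
  | top => simp [Formula.subst, Formula.fv]
  | rel S ts =>
      simp only [Formula.subst, Formula.fv]
      refine Set.iUnion_subset fun i => (Term.fv_subst_const _ _ _).trans ?_
      exact Set.diff_subset_diff_left (Set.subset_iUnion (fun i => (ts i).fv) i)
  | and φ ψ ihφ ihψ =>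
      simp only [Formula.subst, Formula.fv]
      refine Set.union_subset ((ihφ x).trans ?_) ((ihψ x).trans ?_)
      · exact Set.diff_subset_diff_left Set.subset_union_left
      · exact Set.diff_subset_diff_left Set.subset_union_right
  | dia φ ih => simpa [Formula.subst, Formula.fv] using ih x
  | all y φ ih =>
      by_cases h : y = x
      · subst h
        simp only [Formula.subst, if_pos rfl, Formula.fv]
        intro a ha; exact ⟨ha, ha.2⟩
      · simp only [Formula.subst, if_neg h, Formula.fv]
        intro a ha
        rcases ha with ⟨ha1, ha2⟩
        have := (ih x) ha1
        exact ⟨⟨this.1, ha2⟩, this.2⟩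

lemma Derives.mdepth_le {φ ψ : Formula Sig} (h : Derives φ ψ) :
    ψ.mdepth ≤ φ.mdepth := by
  induction h with
  | topIntro φ => simp [Formula.mdepth]
  | refl φ => exact le_refl _
  | andE₁ φ ψ => simp [Formula.mdepth]
  | andE₂ φ ψ => simp [Formula.mdepth]
  | andI h1 h2 ih1 ih2 => simp [Formula.mdepth]; omega
  | cut h1 h2 ih1 ih2 => omega
  | nec h ih => simp [Formula.mdepth]; omega
  | diaTrans φ => simp [Formula.mdepth]
  | diaAll x φ => simp [Formula.mdepth]
  | allR h hx ih => simpa [Formula.mdepth] using ih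
  | allL h hf ih => simp only [Formula.mdepth]; rw [Formula.mdepth_subst] at ih; omega
  | termInst h h1 h2 ih => rw [Formula.mdepth_subst, Formula.mdepth_subst]; exact ih
  | constGen h h1 h2 ih => rw [Formula.mdepth_subst, Formula.mdepth_subst] at ih; exact ih

end AuxQRC
section AuxQRC2
variable {Sig : Signature}

lemma derives_foldl_base (γ : Formula Sig) (l : List (Formula Sig)) :
    Derives (l.foldl .and γ) γ := by
  induction l generalizing γ with
  | nil => exact Derives.refl γ
  | cons a l ih =>
      simp only [List.foldl_cons]
      exact Derives.cut (ih (γ.and a)) (Derives.andE₁ _ _)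

lemma derives_foldl_mem (γ : Formula Sig) (l : List (Formula Sig)) (δ : Formula Sig)
    (h : δ ∈ l) : Derives (l.foldl .and γ) δ := by
  induction l generalizing γ with
  | nil => cases h
  | cons a l ih =>
      simp only [List.foldl_cons]
      rcases List.mem_cons.mp h with rfl | h
      · exact Derives.cut (derives_foldl_base (γ.and δ) l) (Derives.andE₂ _ _)
      · exact ih (γ.and a) h

lemma derives_foldl_of {χ : Formula Sig} (γ : Formula Sig) (l : List (Formula Sig))
    (hγ : Derives χ γ) (hl : ∀ δ ∈ l, Derives χ δ) : Derives χ (l.foldl .and γ) := by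
  induction l generalizing γ with
  | nil => exact hγ
  | cons a l ih =>
      simp only [List.foldl_cons]
      exact ih (γ.and a) (Derives.andI hγ (hl a (List.mem_cons_self)))
        (fun δ hδ => hl δ (List.mem_cons_of_mem a hδ))

lemma setDerives_of_mem {Γ : Set (Formula Sig)} {φ : Formula Sig} (h : φ ∈ Γ) :
    SetDerives Γ φ :=
  ⟨φ, [], h, by simp, Derives.refl φ⟩

lemma SetDerives.and {Γ : Set (Formula Sig)} {φ ψ : Formula Sig}
    (h1 : SetDerives Γ φ) (h2 : SetDerives Γ ψ) : SetDerives Γ (φ.and ψ) := by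
  obtain ⟨γ₁, l₁, hγ₁, hl₁, hd₁⟩ := h1
  obtain ⟨γ₂, l₂, hγ₂, hl₂, hd₂⟩ := h2
  refine ⟨γ₁, l₁ ++ γ₂ :: l₂, hγ₁, ?_, ?_⟩
  · intro δ hδ
    rcases List.mem_append.mp hδ with h | h
    · exact hl₁ δ h
    · rcases List.mem_cons.mp h with rfl | h
      · exact hγ₂
      · exact hl₂ δ h
  · have hb1 : Derives ((l₁ ++ γ₂ :: l₂).foldl .and γ₁) (l₁.foldl .and γ₁) :=
      derives_foldl_of γ₁ l₁ (derives_foldl_base _ _)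
        (fun δ hδ => derives_foldl_mem _ _ _ (List.mem_append_left _ hδ))
    have hb2 : Derives ((l₁ ++ γ₂ :: l₂).foldl .and γ₁) (l₂.foldl .and γ₂) :=
      derives_foldl_of γ₂ l₂
        (derives_foldl_mem _ _ _ (List.mem_append_right _ (List.mem_cons_self)))
        (fun δ hδ => derives_foldl_mem _ _ _
          (List.mem_append_right _ (List.mem_cons_of_mem _ hδ)))
    exact Derives.andI (Derives.cut hb1 hd₁) (Derives.cut hb2 hd₂)

lemma setDerives_foldl {Γ : Set (Formula Sig)} {γ : Formula Sig} {l : List (Formula Sig)}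
    (hγ : SetDerives Γ γ) (hl : ∀ δ ∈ l, SetDerives Γ δ) :
    SetDerives Γ (l.foldl .and γ) := by
  induction l generalizing γ with
  | nil => exact hγ
  | cons a l ih =>
      simp only [List.foldl_cons]
      exact ih (SetDerives.and hγ (hl a (List.mem_cons_self)))
        (fun δ hδ => hl δ (List.mem_cons_of_mem a hδ))

lemma SetDerives.cutAll {Γ Γ' : Set (Formula Sig)} {δ : Formula Sig}
    (hall : ∀ φ ∈ Γ', SetDerives Γ φ) (h : SetDerives Γ' δ) : SetDerives Γ δ := by
  obtain ⟨γ, l, hγ, hl, hd⟩ := h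
  obtain ⟨γ', l', hγ', hl', hd'⟩ :=
    setDerives_foldl (hall γ hγ) (fun χ hχ => hall χ (hl χ hχ))
  exact ⟨γ', l', hγ', hl', Derives.cut hd' hd⟩

lemma mdepth_foldl_le {γ : Formula Sig} {l : List (Formula Sig)} {n : ℕ}
    (hγ : γ.mdepth ≤ n) (hl : ∀ δ ∈ l, Formula.mdepth δ ≤ n) :
    (l.foldl .and γ).mdepth ≤ n := by
  induction l generalizing γ with
  | nil => exact hγ
  | cons a l ih =>
      simp only [List.foldl_cons]
      refine ih ?_ (fun δ hδ => hl δ (List.mem_cons_of_mem a hδ))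
      simp only [Formula.mdepth, max_le_iff]
      exact ⟨hγ, hl a (List.mem_cons_self)⟩

lemma fv_foldl_empty {γ : Formula Sig} {l : List (Formula Sig)}
    (hγ : γ.fv = ∅) (hl : ∀ δ ∈ l, Formula.fv δ = ∅) :
    (l.foldl .and γ).fv = ∅ := by
  induction l generalizing γ with
  | nil => exact hγ
  | cons a l ih =>
      simp only [List.foldl_cons]
      refine ih ?_ (fun δ hδ => hl δ (List.mem_cons_of_mem a hδ))
      simp [Formula.fv, hγ, hl a (List.mem_cons_self)]

lemma consts_foldl_sub {γ : Formula Sig} {l : List (Formula Sig)} {C : Set Sig.Const}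
    (hγ : γ.consts ⊆ C) (hl : ∀ δ ∈ l, Formula.consts δ ⊆ C) :
    (l.foldl .and γ).consts ⊆ C := by
  induction l generalizing γ with
  | nil => exact hγ
  | cons a l ih =>
      simp only [List.foldl_cons]
      refine ih ?_ (fun δ hδ => hl δ (List.mem_cons_of_mem a hδ))
      simp only [Formula.consts]
      exact Set.union_subset hγ (hl a (List.mem_cons_self))

end AuxQRC2
section AuxQRC3
variable {Sig : Signature} {C D : Set Sig.Const}

lemma mem_Cl_self (C : Set Sig.Const) (φ : Formula Sig) : φ ∈ Cl C φ := by
  cases φ <;> simp [Cl]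

lemma Cl_aux : ∀ n : ℕ, ∀ φ : Formula Sig, φ.size ≤ n → ∀ ψ ∈ Cl C φ,
    (ψ.mdepth ≤ φ.mdepth) ∧ (ψ.fv ⊆ φ.fv) ∧
    (C ⊆ D → ψ ∈ Cl D φ) ∧
    (∃ T : Set Sig.Const, T ⊆ C ∧ T.Finite ∧ T.ncard ≤ φ.size ∧
      ψ.consts ⊆ φ.consts ∪ T) := by
  intro n
  induction n with
  | zero => intro φ hφ; exact absurd (lt_of_lt_of_le φ.size_pos hφ) (by simp)
  | succ n ih =>
      intro φ hφ ψ hψ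
      cases φ with
      | top =>
          simp only [Cl, Set.mem_singleton_iff] at hψ
          subst hψ
          exact ⟨le_refl _, le_refl _, fun _ => mem_Cl_self _ _,
            ⟨∅, by simp, by simp, by simp, by simp⟩⟩
      | rel S ts =>
          simp only [Cl, Set.mem_insert_iff, Set.mem_singleton_iff] at hψ
          rcases hψ with rfl | rfl
          · exact ⟨le_refl _, le_refl _, fun _ => mem_Cl_self _ _,
              ⟨∅, by simp, by simp, by simp, by simp⟩⟩
          · refine ⟨by simp [Formula.mdepth], by simp [Formula.fv],
              fun _ => by simp [Cl], ⟨∅, by simp, by simp, by simp,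
              by simp [Formula.consts]⟩⟩
      | and φ₁ φ₂ =>
          have hs : φ₁.size ≤ n ∧ φ₂.size ≤ n := by
            simp only [Formula.size] at hφ; omega
          simp only [Cl, Set.mem_union, Set.mem_singleton_iff] at hψ
          rcases hψ with (rfl | h) | h
          · exact ⟨le_refl _, le_refl _, fun _ => mem_Cl_self _ _,
              ⟨∅, by simp, by simp, by simp, by simp⟩⟩
          · obtain ⟨h1, h2, h3, T, hT1, hT2, hT3, hT4⟩ := ih φ₁ hs.1 ψ h
            refine ⟨h1.trans (by simp [Formula.mdepth]),
              h2.trans (by simp only [Formula.fv]; exact Set.subset_union_left),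
              fun hCD => by simp only [Cl]; exact Or.inl (Or.inr (h3 hCD)),
              ⟨T, hT1, hT2, hT3.trans (by simp [Formula.size]; omega), ?_⟩⟩
            refine hT4.trans (Set.union_subset_union_left _ ?_)
            simp only [Formula.consts]; exact Set.subset_union_left
          · obtain ⟨h1, h2, h3, T, hT1, hT2, hT3, hT4⟩ := ih φ₂ hs.2 ψ h
            refine ⟨h1.trans (by simp [Formula.mdepth]),
              h2.trans (by simp only [Formula.fv]; exact Set.subset_union_right),
              fun hCD => by simp only [Cl]; exact Or.inr (h3 hCD),
              ⟨T, hT1, hT2, hT3.trans (by simp [Formula.size]; omega), ?_⟩⟩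
            refine hT4.trans (Set.union_subset_union_left _ ?_)
            simp only [Formula.consts]; exact Set.subset_union_right
      | dia φ₁ =>
          have hs : φ₁.size ≤ n := by simp only [Formula.size] at hφ; omega
          simp only [Cl, Set.mem_union, Set.mem_singleton_iff] at hψ
          rcases hψ with rfl | h
          · exact ⟨le_refl _, le_refl _, fun _ => mem_Cl_self _ _,
              ⟨∅, by simp, by simp, by simp, by simp⟩⟩
          · obtain ⟨h1, h2, h3, T, hT1, hT2, hT3, hT4⟩ := ih φ₁ hs ψ h
            exact ⟨h1.trans (by simp [Formula.mdepth]), h2,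
              fun hCD => by simp only [Cl]; exact Or.inr (h3 hCD),
              ⟨T, hT1, hT2, hT3.trans (by simp [Formula.size]), hT4⟩⟩
      | all x φ₁ =>
          have hs : ∀ c : Sig.Const, (φ₁.subst x (.const c)).size ≤ n := by
            intro c; rw [Formula.size_subst]; simp only [Formula.size] at hφ; omega
          simp only [Cl, Set.mem_union, Set.mem_singleton_iff, Set.mem_iUnion] at hψ
          rcases hψ with rfl | ⟨c, hc, h⟩
          · exact ⟨le_refl _, le_refl _, fun _ => mem_Cl_self _ _,
              ⟨∅, by simp, by simp, by simp, by simp⟩⟩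
          · obtain ⟨h1, h2, h3, T, hT1, hT2, hT3, hT4⟩ := ih _ (hs c) ψ h
            refine ⟨h1.trans (by rw [Formula.mdepth_subst]; simp [Formula.mdepth]),
              h2.trans ((Formula.fv_subst_const _ _ _).trans (by simp [Formula.fv])),
              fun hCD => ?_, ⟨insert c T, Set.insert_subset hc hT1, hT2.insert c, ?_, ?_⟩⟩
            · simp only [Cl, Set.mem_union, Set.mem_iUnion]
              exact Or.inr ⟨c, hCD hc, h3 hCD⟩
            · refine (Set.ncard_insert_le c T).trans ?_
              rw [Formula.size_subst] at hT3
              simp only [Formula.size]; omega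
            · refine hT4.trans ?_
              refine Set.union_subset ?_ (by intro a ha; exact Or.inr (Or.inr ha))
              refine (Formula.consts_subst_const _ _ _).trans ?_
              intro a ha
              rcases ha with ha | ha
              · exact Or.inl ha
              · exact Or.inr (Or.inl ha)

lemma Cl_mdepth_le {φ ψ : Formula Sig} (h : ψ ∈ Cl C φ) : ψ.mdepth ≤ φ.mdepth :=
  (Cl_aux (D := C) φ.size φ (le_refl _) ψ h).1

lemma Cl_fv_sub {φ ψ : Formula Sig} (h : ψ ∈ Cl C φ) : ψ.fv ⊆ φ.fv :=
  (Cl_aux (D := C) φ.size φ (le_refl _) ψ h).2.1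

lemma Cl_mono {φ ψ : Formula Sig} (h : ψ ∈ Cl C φ) (hCD : C ⊆ D) : ψ ∈ Cl D φ :=
  (Cl_aux φ.size φ (le_refl _) ψ h).2.2.1 hCD

lemma Cl_consts_bound {φ ψ : Formula Sig} (h : ψ ∈ Cl C φ) :
    ∃ T : Set Sig.Const, T ⊆ C ∧ T.Finite ∧ T.ncard ≤ φ.size ∧
      ψ.consts ⊆ φ.consts ∪ T :=
  (Cl_aux (D := C) φ.size φ (le_refl _) ψ h).2.2.2

lemma Cl_inst : ∀ n : ℕ, ∀ φ : Formula Sig, φ.size ≤ n → ∀ (x : ℕ) (ψ : Formula Sig),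
    Formula.all x ψ ∈ Cl C φ → ∀ c ∈ C, ψ.subst x (.const c) ∈ Cl C φ := by
  intro n
  induction n with
  | zero => intro φ hφ; exact absurd (lt_of_lt_of_le φ.size_pos hφ) (by simp)
  | succ n ih =>
      intro φ hφ x ψ hψ c hc
      cases φ with
      | top => simp [Cl] at hψ
      | rel S ts => simp [Cl] at hψ
      | and φ₁ φ₂ =>
          have hs : φ₁.size ≤ n ∧ φ₂.size ≤ n := by
            simp only [Formula.size] at hφ; omega
          simp only [Cl, Set.mem_union, Set.mem_singleton_iff] at hψ ⊢
          rcases hψ with (h | h) | h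
          · simp at h
          · exact Or.inl (Or.inr (ih φ₁ hs.1 x ψ h c hc))
          · exact Or.inr (ih φ₂ hs.2 x ψ h c hc)
      | dia φ₁ =>
          have hs : φ₁.size ≤ n := by simp only [Formula.size] at hφ; omega
          simp only [Cl, Set.mem_union, Set.mem_singleton_iff] at hψ ⊢
          rcases hψ with h | h
          · simp at h
          · exact Or.inr (ih φ₁ hs x ψ h c hc)
      | all y φ₁ =>
          have hs : ∀ d : Sig.Const, (φ₁.subst y (.const d)).size ≤ n := by
            intro d; rw [Formula.size_subst]; simp only [Formula.size] at hφ; omega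
          simp only [Cl, Set.mem_union, Set.mem_singleton_iff, Set.mem_iUnion] at hψ ⊢
          rcases hψ with h | ⟨d, hd, h⟩
          · obtain ⟨rfl, rfl⟩ : y = x ∧ φ₁ = ψ := by
              injection h.symm with h1 h2; exact ⟨h1, h2⟩
            exact Or.inr ⟨c, hc, mem_Cl_self _ _⟩
          · exact Or.inr ⟨d, hd, ih _ (hs d) x ψ h c hc⟩

lemma mem_ClSet_iff {Γ : Set (Formula Sig)} {ψ : Formula Sig} :
    ψ ∈ ClSet C Γ ↔ ∃ φ ∈ Γ, ψ ∈ Cl C φ := by simp [ClSet]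

end AuxQRC3
/-- Lindenbaum-type lemma for QRC₁: any consistent pair p ⊆ Cl_C(Φ), for a
finite set Φ of closed formulas with constants among the finite set C, extends to a
Cl_D(Φ)-maximal consistent fully witnessed pair q for some finite set of constants D ⊇ C,
with mdepth(q⁺) = mdepth(p⁺). -/
theorem qrc1_lindenbaum (Sig : Signature) [Infinite Sig.Const]
    (C : Set Sig.Const) (hC : C.Finite)
    (Φ : Set (Formula Sig)) (hΦfin : Φ.Finite)
    (hΦ : ∀ φ ∈ Φ, φ.fv = ∅ ∧ φ.consts ⊆ C)
    (p : Pair Sig) (hpos : p.pos ⊆ ClSet C Φ) (hneg : p.neg ⊆ ClSet C Φ)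
    (hcons : p.Consistent) :
    ∃ (D : Set Sig.Const) (q : Pair Sig),
      C ⊆ D ∧ D.Finite ∧ p.pos ⊆ q.pos ∧ p.neg ⊆ q.neg ∧
      q.MaxCons (ClSet D Φ) ∧ q.FullyWitnessed ∧
      mdepthSet q.pos = mdepthSet p.pos := by
  classical
  -- a bound on the sizes of formulas in Φ
  obtain ⟨b, hb⟩ : ∃ b : ℕ, ∀ φ ∈ Φ, Formula.size φ ≤ b := by
    obtain ⟨b, hb⟩ := (hΦfin.image Formula.size).bddAbove
    exact ⟨b, fun φ hφ => hb (Set.mem_image_of_mem _ hφ)⟩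
  -- a bound on the modal depths of formulas in Φ
  obtain ⟨m, hm⟩ : ∃ m : ℕ, ∀ φ ∈ Φ, Formula.mdepth φ ≤ m := by
    obtain ⟨m, hm⟩ := (hΦfin.image Formula.mdepth).bddAbove
    exact ⟨m, fun φ hφ => hm (Set.mem_image_of_mem _ hφ)⟩
  -- fresh constants
  obtain ⟨F, hFsub, hFcard⟩ := (hC.infinite_compl).exists_subset_card_eq (b + 1)
  set D : Set Sig.Const := C ∪ ↑F with hD
  have hCD : C ⊆ D := Set.subset_union_left
  have hDfin : D.Finite := hC.union F.finite_toSet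
  -- properties of formulas in the closure over C
  have hclC : ∀ φ ∈ ClSet C Φ, φ.fv = ∅ ∧ φ.consts ⊆ C := by
    intro φ hφ
    obtain ⟨ρ, hρ, hmem⟩ := mem_ClSet_iff.mp hφ
    obtain ⟨hρfv, hρc⟩ := hΦ ρ hρ
    constructor
    · have := Cl_fv_sub hmem
      rw [hρfv] at this
      exact Set.subset_empty_iff.mp this
    · obtain ⟨T, hT1, _, _, hT4⟩ := Cl_consts_bound hmem
      exact hT4.trans (Set.union_subset hρc hT1)
  -- the closure over C is contained in the closure over D
  have hClmono : ClSet C Φ ⊆ ClSet D Φ := by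
    intro ψ hψ
    obtain ⟨ρ, hρ, hmem⟩ := mem_ClSet_iff.mp hψ
    exact mem_ClSet_iff.mpr ⟨ρ, hρ, Cl_mono hmem hCD⟩
  -- the key generalization lemma
  have keyW : ∀ (x : ℕ) (ψ : Formula Sig) (c : Sig.Const), c ∉ C → c ∉ ψ.consts →
      SetDerives p.pos (ψ.subst x (.const c)) → SetDerives p.pos (.all x ψ) := by
    intro x ψ c hcC hcψ ⟨γ, l, hγ, hl, hd⟩
    set χ : Formula Sig := l.foldl .and γ with hχ
    have hχfv : χ.fv = ∅ :=
      fv_foldl_empty (hclC γ (hpos hγ)).1 (fun δ hδ => (hclC δ (hpos (hl δ hδ))).1)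
    have hχc : χ.consts ⊆ C :=
      consts_foldl_sub (hclC γ (hpos hγ)).2 (fun δ hδ => (hclC δ (hpos (hl δ hδ))).2)
    have hd' : Derives (χ.subst x (.const c)) (ψ.subst x (.const c)) := by
      rw [Formula.subst_of_not_fv χ x _ (by rw [hχfv]; exact Set.notMem_empty x)]
      exact hd
    have hgen : Derives χ ψ :=
      Derives.constGen hd' (fun h => hcC (hχc h)) hcψ
    exact ⟨γ, l, hγ, hl,
      Derives.allR hgen (by rw [hχfv]; exact Set.notMem_empty x)⟩
  -- the maximal pair
  refine ⟨D, ⟨{φ | φ ∈ ClSet D Φ ∧ SetDerives p.pos φ},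
    {φ | φ ∈ ClSet D Φ ∧ ¬ SetDerives p.pos φ}⟩, hCD, hDfin, ?_, ?_, ?_, ?_, ?_⟩
  · -- p.pos ⊆ q.pos
    intro φ hφ
    exact ⟨hClmono (hpos hφ), setDerives_of_mem hφ⟩
  · -- p.neg ⊆ q.neg
    intro δ hδ
    exact ⟨hClmono (hneg hδ), hcons δ hδ⟩
  · -- MaxCons
    refine ⟨?_, fun φ hφ => hφ.1, fun φ hφ => hφ.1, ?_⟩
    · -- consistent
      intro δ hδ hSD
      exact hδ.2 (SetDerives.cutAll (fun φ hφ => hφ.2) hSD)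
    · -- maximal
      rintro ⟨qp, qn⟩ ⟨h1, h2, h3, h4⟩ hqcons
      have hposeq : qp = {φ | φ ∈ ClSet D Φ ∧ SetDerives p.pos φ} := by
        apply Set.Subset.antisymm _ h1
        intro φ hφ
        refine ⟨h2 hφ, ?_⟩
        by_contra hnd
        have hφneg : φ ∈ qn := h3 ⟨h2 hφ, hnd⟩
        exact hqcons φ hφneg (setDerives_of_mem hφ)
      have hnegeq : qn = {φ | φ ∈ ClSet D Φ ∧ ¬ SetDerives p.pos φ} := by
        apply Set.Subset.antisymm _ h3
        intro φ hφ
        refine ⟨h4 hφ, ?_⟩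
        intro hSD
        have hφpos : φ ∈ qp := h1 ⟨h4 hφ, hSD⟩
        exact hqcons φ hφ (setDerives_of_mem hφpos)
      simp only [Pair.mk.injEq]
      exact ⟨hposeq, hnegeq⟩
  · -- fully witnessed
    intro x ψ ⟨hmem, hnd⟩
    obtain ⟨ρ, hρ, hclmem⟩ := mem_ClSet_iff.mp hmem
    obtain ⟨T, hT1, hT2, hT3, hT4⟩ := Cl_consts_bound hclmem
    have hψc : ψ.consts ⊆ C ∪ T := by
      have h1 : (Formula.all x ψ).consts ⊆ C ∪ T :=
        hT4.trans (Set.union_subset ((hΦ ρ hρ).2.trans Set.subset_union_left)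
          Set.subset_union_right)
      exact h1
    obtain ⟨c, hcF, hcCT⟩ : ∃ c ∈ F, c ∉ C ∪ T := by
      by_contra hcon
      push_neg at hcon
      have hFT : ↑F ⊆ T := by
        intro a ha
        rcases hcon a ha with h | h
        · exact absurd h (by simpa using hFsub ha)
        · exact h
      have : (b + 1 : ℕ) ≤ T.ncard := by
        rw [← hFcard, ← Set.ncard_coe_finset]
        exact Set.ncard_le_ncard hFT hT2
      have : T.ncard ≤ b := hT3.trans (hb ρ hρ)
      omega
    have hcC : c ∉ C := fun h => hcCT (Or.inl h)
    have hcψ : c ∉ ψ.consts := fun h => hcCT (hψc h)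
    have hcD : c ∈ D := Or.inr hcF
    refine ⟨c, ?_, ?_⟩
    · exact mem_ClSet_iff.mpr
        ⟨ρ, hρ, Cl_inst ρ.size ρ (le_refl _) x ψ hclmem c hcD⟩
    · intro hSD
      exact hnd (keyW x ψ c hcC hcψ hSD)
  · -- modal depth
    have hbdd : ∀ ψ ∈ ClSet D Φ, Formula.mdepth ψ ≤ m := by
      intro ψ hψ
      obtain ⟨ρ, hρ, hmem⟩ := mem_ClSet_iff.mp hψ
      exact (Cl_mdepth_le hmem).trans (hm ρ hρ)
    have hbddq : BddAbove (Formula.mdepth ''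
        {φ | φ ∈ ClSet D Φ ∧ SetDerives p.pos φ}) := by
      refine ⟨m, ?_⟩
      rintro a ⟨φ, hφ, rfl⟩
      exact hbdd φ hφ.1
    have hbddp : BddAbove (Formula.mdepth '' p.pos) := by
      refine ⟨m, ?_⟩
      rintro a ⟨φ, hφ, rfl⟩
      exact hbdd φ (hClmono (hpos hφ))
    have hle : ∀ φ ∈ {φ | φ ∈ ClSet D Φ ∧ SetDerives p.pos φ},
        Formula.mdepth φ ≤ mdepthSet p.pos := by
      rintro φ ⟨_, γ, l, hγ, hl, hd⟩
      refine (Derives.mdepth_le hd).trans (mdepth_foldl_le ?_ ?_)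
      · exact le_csSup hbddp (Set.mem_image_of_mem _ hγ)
      · exact fun δ hδ => le_csSup hbddp (Set.mem_image_of_mem _ (hl δ hδ))
    apply le_antisymm
    · rcases Set.eq_empty_or_nonempty
        ((Formula.mdepth '' {φ | φ ∈ ClSet D Φ ∧ SetDerives p.pos φ})) with h | h
      · simp only [mdepthSet, h, csSup_empty]
        exact Nat.zero_le _
      · exact csSup_le h (by rintro a ⟨φ, hφ, rfl⟩; exact hle φ hφ)
    · rcases Set.eq_empty_or_nonempty p.pos with h | h
      · simp only [mdepthSet, h, Set.image_empty, csSup_empty]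
        exact Nat.zero_le _
      · refine csSup_le_csSup hbddq ?_ ?_
        · exact h.image _
        · apply Set.image_mono
          intro φ hφ
          exact ⟨hClmono (hpos hφ), setDerives_of_mem hφ⟩
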